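/- Positive-definiteness of the level set structure: let λ, t ∈ ℝⁿ, set σ₁ = Σᵢ λᵢ, and suppose σ₁² = |λ|² + 2 (i.e. σ₂(λ) = 1) and Σᵢ (σ₁ − λᵢ) tᵢ = 0. Then −Σ_{i≠j} tᵢ tⱼ = [ (|λ|² + 2)|t|² − ⟨λ, t⟩² ] / σ₁², and in particular −Σ_{i≠j} tᵢ tⱼ ≥ 0 by the Cauchy–Schwarz inequality. -/

import Mathlib

/-- Convexity of the level set of the sigma-2 equation: the cross terms have a positive
representation, hence are nonnegative. -/
theorem sigma2_level_set_positivity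
    (n : ℕ) (l t : Fin n → ℝ)
    (heq : (∑ i, l i) ^ 2 = (∑ i, (l i) ^ 2) + 2)
    (horth : ∑ i, ((∑ j, l j) - l i) * t i = 0) :
    -(∑ i, ∑ j, if i ≠ j then t i * t j else 0)
        = (((∑ i, (l i) ^ 2) + 2) * (∑ i, (t i) ^ 2) - (∑ i, l i * t i) ^ 2) /
            (∑ i, l i) ^ 2 ∧
      0 ≤ -(∑ i, ∑ j, if i ≠ j then t i * t j else 0) := by
  set s1 := ∑ i, l i with hs1
  set S := ∑ i, t i with hS
  set L2 := ∑ i, (l i) ^ 2 with hL2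
  set T2 := ∑ i, (t i) ^ 2 with hT2
  set p := ∑ i, l i * t i with hp
  have hL2nn : 0 ≤ L2 := Finset.sum_nonneg fun i _ => sq_nonneg _
  have hT2nn : 0 ≤ T2 := Finset.sum_nonneg fun i _ => sq_nonneg _
  have hs1pos : (0:ℝ) < s1 ^ 2 := by rw [heq]; linarith
  -- orthogonality gives p = s1 * S
  have hps : p = s1 * S := by
    have : ∑ i, (s1 - l i) * t i = s1 * S - p := by
      simp only [sub_mul, Finset.sum_sub_distrib, ← Finset.mul_sum, hS, hp]
    rw [this] at horth
    linarith
  -- cross sum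
  have hcross : (∑ i, ∑ j, if i ≠ j then t i * t j else 0) = S ^ 2 - T2 := by
    have h1 : ∀ i : Fin n, (∑ j, if i ≠ j then t i * t j else 0)
        = t i * S - (t i) ^ 2 := by
      intro i
      have : (∑ j, if i ≠ j then t i * t j else 0)
          = ∑ j, (t i * t j - if i = j then t i * t j else 0) := by
        apply Finset.sum_congr rfl
        intro j _
        by_cases h : i = j <;> simp [h]
      rw [this, Finset.sum_sub_distrib, Finset.sum_ite_eq, ← Finset.mul_sum]
      simp [hS, sq]
    rw [Finset.sum_congr rfl fun i _ => h1 i, Finset.sum_sub_distrib,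
      ← Finset.sum_mul]
    ring_nf
    rw [← hS, ← hT2]; ring
  have hCS : p ^ 2 ≤ L2 * T2 := Finset.sum_mul_sq_le_sq_mul_sq Finset.univ l t
  have key : -(S ^ 2 - T2) = ((L2 + 2) * T2 - p ^ 2) / s1 ^ 2 := by
    rw [eq_div_iff (ne_of_gt hs1pos), hps, ← heq]
    ring
  constructor
  · rw [hcross]; exact key
  · rw [hcross, key]
    apply div_nonneg _ (le_of_lt hs1pos)
    nlinarith
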